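/- Let G be a P5-free graph, let C ⊆ V(G), and let C = C_L ⊎ C_R be a partition of C such that C_L and C_R are both independent sets in G. Let D ⊆ C, set D_L = D ∩ C_L and D_R = D ∩ C_R, and assume: D_L ≠ ∅, D_R ≠ ∅, every vertex of D_L is adjacent in G to every vertex of D_R, and C ⊆ N[D] (D dominates C). Let X = N(C) \ N(D) and Y = V(G) \ N[C]. Then there is no edge of G with one endpoint in X and the other in Y, i.e., E(X,Y) = ∅. -/

import Mathlib

open SimpleGraph

/-- A graph is `P₅`-free if it contains no induced subgraph isomorphic to the
path on five vertices (i.e. no graph embedding of `pathGraph 5`). -/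
def P5Free {V : Type*} (G : SimpleGraph V) : Prop :=
  IsEmpty (SimpleGraph.pathGraph 5 ↪g G)

/-- `N(A)`: the set of vertices outside `A` with a neighbor in `A`. -/
def nbhdSet {V : Type*} (G : SimpleGraph V) (A : Set V) : Set V :=
  {v | v ∉ A ∧ ∃ a ∈ A, G.Adj v a}

/-- `N[A] = N(A) ∪ A`. -/
def closedNbhdSet {V : Type*} (G : SimpleGraph V) (A : Set V) : Set V :=
  nbhdSet G A ∪ A

/-- A set of vertices is independent in `G`. -/
def SetIndep {V : Type*} (G : SimpleGraph V) (A : Set V) : Prop :=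
  ∀ x ∈ A, ∀ y ∈ A, ¬ G.Adj x y

/-- An induced path on five vertices yields an embedding of `pathGraph 5`. -/
lemma p5_of_path {V : Type*} (G : SimpleGraph V) (a b c d e : V)
    (hab : G.Adj a b) (hbc : G.Adj b c) (hcd : G.Adj c d) (hde : G.Adj d e)
    (hac : ¬ G.Adj a c) (had : ¬ G.Adj a d) (hae : ¬ G.Adj a e)
    (hbd : ¬ G.Adj b d) (hbe : ¬ G.Adj b e) (hce : ¬ G.Adj c e)
    (nac : a ≠ c) (nad : a ≠ d) (nae : a ≠ e)
    (nbd : b ≠ d) (nbe : b ≠ e) (nce : c ≠ e) :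
    Nonempty (pathGraph 5 ↪g G) := by
  refine ⟨⟨⟨![a,b,c,d,e], ?_⟩, ?_⟩⟩
  · intro i j h
    fin_cases i <;> fin_cases j <;>
      simp_all [hab.ne, hbc.ne, hcd.ne, hde.ne, hab.ne', hbc.ne', hcd.ne', hde.ne',
        nac.symm, nad.symm, nae.symm, nbd.symm, nbe.symm, nce.symm]
  · intro i j
    show G.Adj (![a, b, c, d, e] i) (![a, b, c, d, e] j) ↔ (pathGraph 5).Adj i j
    have hba := hab.symm
    have hcb := hbc.symm
    have hdc := hcd.symm
    have hed := hde.symm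
    have hca : ¬ G.Adj c a := fun h => hac h.symm
    have hda : ¬ G.Adj d a := fun h => had h.symm
    have hea : ¬ G.Adj e a := fun h => hae h.symm
    have hdb : ¬ G.Adj d b := fun h => hbd h.symm
    have heb : ¬ G.Adj e b := fun h => hbe h.symm
    have hec : ¬ G.Adj e c := fun h => hce h.symm
    fin_cases i <;> fin_cases j <;>
      simp_all [pathGraph_adj, G.irrefl] <;> decide

theorem no_edges_between_X_and_Y
    {V : Type*} [Fintype V] (G : SimpleGraph V) (hP5 : P5Free G)
    (C CL CR D : Set V)
    (hpart : CL ∪ CR = C) (hLR : Disjoint CL CR)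
    (hCLind : SetIndep G CL) (hCRind : SetIndep G CR)
    (hDC : D ⊆ C)
    (hDL : (D ∩ CL).Nonempty) (hDR : (D ∩ CR).Nonempty)
    (hDadj : ∀ x ∈ D ∩ CL, ∀ y ∈ D ∩ CR, G.Adj x y)
    (hdom : C ⊆ closedNbhdSet G D) :
    ∀ x ∈ nbhdSet G C \ nbhdSet G D,
      ∀ y ∈ (Set.univ : Set V) \ closedNbhdSet G C, ¬ G.Adj x y := by
  rintro x ⟨⟨hxC, c, hcC, hxc⟩, hxND⟩ y ⟨-, hyN⟩ hadj
  -- y has no neighbor in C and y ∉ C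
  have hyC : y ∉ C := fun h => hyN (Or.inr h)
  have hynadj : ∀ a ∈ C, ¬ G.Adj y a := by
    intro a ha h
    exact hyN (Or.inl ⟨hyC, a, ha, h⟩)
  -- x has no neighbor in D
  have hxD : x ∉ D := fun h => hxC (hDC h)
  have hxnadj : ∀ a ∈ D, ¬ G.Adj x a := by
    intro a ha h
    exact hxND ⟨hxD, a, ha, h⟩
  -- c ∉ D (else x would have a neighbor in D)
  have hcD : c ∉ D := fun h => hxnadj c h hxc
  -- c has a neighbor d in D
  obtain ⟨-, d, hdD, hcd⟩ : c ∈ nbhdSet G D := (hdom hcC).resolve_right hcD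
  have hdC : d ∈ CL ∪ CR := hpart ▸ hDC hdD
  have hcLR : c ∈ CL ∪ CR := hpart ▸ hcC
  have hyx : y ≠ x := fun h => G.irrefl (h ▸ hadj)
  -- build the induced path y - x - c - d - d'
  have key : ∀ d' : V, d' ∈ D → G.Adj d d' → ¬ G.Adj c d' → False := by
    intro d' hd'D hdd' hcd'
    have hd'C : d' ∈ C := hDC hd'D
    have hdCC : d ∈ C := hDC hdD
    exact hP5.false (Classical.choice (p5_of_path G y x c d d'
      hadj.symm hxc hcd hdd'
      (hynadj c hcC) (hynadj d hdCC) (hynadj d' hd'C)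
      (hxnadj d hdD) (hxnadj d' hd'D) hcd'
      (fun h => hyC (h ▸ hcC)) (fun h => hyC (h ▸ hdCC)) (fun h => hyC (h ▸ hd'C))
      (fun h => hxC (h ▸ hdCC)) (fun h => hxC (h ▸ hd'C))
      (fun h => hcD (h ▸ hd'D))))
  rcases hcLR with hcL | hcR
  · -- c ∈ CL, so d ∈ CR (d can't be in CL by independence)
    have hdR : d ∈ CR := by
      rcases hdC with hdL | hdR
      · exact absurd hcd (hCLind c hcL d hdL)
      · exact hdR
    obtain ⟨d', hd'D, hd'L⟩ := hDL
    exact key d' hd'D (hDadj d' ⟨hd'D, hd'L⟩ d ⟨hdD, hdR⟩).symm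
      (hCLind c hcL d' hd'L)
  · -- c ∈ CR, so d ∈ CL
    have hdL : d ∈ CL := by
      rcases hdC with hdL | hdR
      · exact hdL
      · exact absurd hcd (hCRind c hcR d hdR)
    obtain ⟨d', hd'D, hd'R⟩ := hDR
    exact key d' hd'D (hDadj d ⟨hdD, hdL⟩ d' ⟨hd'D, hd'R⟩)
      (hCRind c hcR d' hd'R)
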